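/- Monotonicity of the worst-case expected cost in the power-flow magnitudes: suppose the no-failure scenario a₀ (a₀ l = 1 for all l) belongs to 𝒜, and that γ l ≥ 0, β l ≥ 0 and wβ l (y) ≥ 0 for all l ∈ L. If |f l| ≤ |f' l| for every l ∈ L, then the maximum of Σ_{a∈𝒜} q a · H a over q ∈ P(μ̄(f, y)) is at most the maximum of Σ_{a∈𝒜} q a · H a over q ∈ P(μ̄(f', y)) (both maxima being attained over nonempty compact feasible sets). -/

import Mathlib

lemma exists_max_pmf {L : Type*} [Fintype L] (𝒜 : Finset (L → ℝ))
    (ha₀ : (fun _ : L => (1 : ℝ)) ∈ 𝒜) (H : (L → ℝ) → ℝ) (μ : L → ℝ)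
    (hμ : ∀ l, 0 ≤ μ l) :
    ∃ q : (L → ℝ) → ℝ, (∀ a ∈ 𝒜, 0 ≤ q a) ∧ (∑ a ∈ 𝒜, q a = 1) ∧
      (∀ l : L, ∑ a ∈ 𝒜, q a * (1 - a l) ≤ μ l) ∧
      ∀ q' : (L → ℝ) → ℝ, (∀ a ∈ 𝒜, 0 ≤ q' a) → (∑ a ∈ 𝒜, q' a = 1) →
        (∀ l : L, ∑ a ∈ 𝒜, q' a * (1 - a l) ≤ μ l) →
        ∑ a ∈ 𝒜, q' a * H a ≤ ∑ a ∈ 𝒜, q a * H a := by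
  classical
  set ι := {a // a ∈ 𝒜} with hι
  let S : Set (ι → ℝ) :=
    {p | (∀ i, 0 ≤ p i) ∧ (∑ i, p i = 1) ∧ ∀ l : L, ∑ i : ι, p i * (1 - (i : L → ℝ) l) ≤ μ l}
  have hcont : ∀ c : ι → ℝ, Continuous fun p : ι → ℝ => ∑ i, p i * c i := by
    intro c
    exact continuous_finset_sum _ fun i _ => (continuous_apply i).mul continuous_const
  have hSclosed : IsClosed S := by
    have h1 : IsClosed {p : ι → ℝ | ∀ i, 0 ≤ p i} := by
      have : {p : ι → ℝ | ∀ i, 0 ≤ p i} = ⋂ i, {p : ι → ℝ | 0 ≤ p i} := by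
        ext p; simp
      rw [this]
      exact isClosed_iInter fun i => isClosed_le continuous_const (continuous_apply i)
    have h2 : IsClosed {p : ι → ℝ | ∑ i, p i = 1} :=
      isClosed_eq (continuous_finset_sum _ fun i _ => continuous_apply i) continuous_const
    have h3 : IsClosed {p : ι → ℝ | ∀ l : L, ∑ i : ι, p i * (1 - (i : L → ℝ) l) ≤ μ l} := by
      have : {p : ι → ℝ | ∀ l : L, ∑ i : ι, p i * (1 - (i : L → ℝ) l) ≤ μ l}
          = ⋂ l : L, {p : ι → ℝ | ∑ i : ι, p i * (1 - (i : L → ℝ) l) ≤ μ l} := by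
        ext p; simp
      rw [this]
      exact isClosed_iInter fun l => isClosed_le (hcont _) continuous_const
    have hS : S = {p : ι → ℝ | ∀ i, 0 ≤ p i} ∩ ({p : ι → ℝ | ∑ i, p i = 1} ∩
        {p : ι → ℝ | ∀ l : L, ∑ i : ι, p i * (1 - (i : L → ℝ) l) ≤ μ l}) := rfl
    rw [hS]
    exact h1.inter (h2.inter h3)
  have hbox : S ⊆ Set.pi Set.univ fun _ : ι => Set.Icc (0 : ℝ) 1 := by
    rintro p ⟨hp0, hp1, -⟩ i -
    refine ⟨hp0 i, ?_⟩
    calc p i ≤ ∑ j, p j := Finset.single_le_sum (fun j _ => hp0 j) (Finset.mem_univ i)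
      _ = 1 := hp1
  have hScompact : IsCompact S :=
    IsCompact.of_isClosed_subset (isCompact_univ_pi fun _ => isCompact_Icc) hSclosed hbox
  let i₀ : ι := ⟨fun _ => 1, ha₀⟩
  have hSne : S.Nonempty := by
    refine ⟨fun i => if i = i₀ then 1 else 0, ?_, ?_, ?_⟩
    · intro i; dsimp only; split <;> norm_num
    · rw [Finset.sum_eq_single i₀]
      · simp
      · intro i _ hi; simp [hi]
      · simp
    · intro l
      rw [Finset.sum_eq_single i₀]
      · simp [i₀, hμ l]
      · intro i _ hi; simp [hi]
      · simp
  obtain ⟨p, hpS, hpmax⟩ := hScompact.exists_isMaxOn hSne ((hcont fun i => H i).continuousOn)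
  obtain ⟨hp0, hp1, hpc⟩ := hpS
  refine ⟨fun a => if h : a ∈ 𝒜 then p ⟨a, h⟩ else 0, ?_, ?_, ?_, ?_⟩
  · intro a ha; dsimp only; rw [dif_pos ha]; exact hp0 _
  · rw [← Finset.sum_coe_sort 𝒜]
    simp; exact hp1
  · intro l
    rw [← Finset.sum_coe_sort 𝒜 fun a => (if h : a ∈ 𝒜 then p ⟨a, h⟩ else 0) * (1 - a l)]
    simp; exact hpc l
  · intro q' hq0 hq1 hqc
    have hq'S : (fun i : ι => q' i) ∈ S := by
      refine ⟨fun i => hq0 _ i.2, ?_, ?_⟩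
      · rw [← hq1, ← Finset.sum_coe_sort 𝒜 q']
      · intro l
        rw [show (∑ i : ι, q' i * (1 - (i : L → ℝ) l)) = ∑ a ∈ 𝒜, q' a * (1 - a l) from
          Finset.sum_coe_sort 𝒜 fun a => q' a * (1 - a l)]
        exact hqc l
    have := hpmax hq'S
    rw [← Finset.sum_coe_sort 𝒜 fun a => q' a * H a,
      ← Finset.sum_coe_sort 𝒜 fun a => (if h : a ∈ 𝒜 then p ⟨a, h⟩ else 0) * H a]
    simp; exact this


/-- Monotonicity of the worst-case expected cost in the power-flow magnitudes:
if the no-failure scenario belongs to `𝒜`, `γ, β, wβ ≥ 0`, and `|f l| ≤ |f' l|`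
for every line `l`, then the (attained) maximum of the expected recourse cost over
`P(μ̄(f, y))` is at most the (attained) maximum over `P(μ̄(f', y))`. -/
theorem worst_case_cost_monotone_in_flow
    {L : Type*} [Fintype L] [Nonempty L]
    (𝒜 : Finset (L → ℝ)) (h𝒜 : 𝒜.Nonempty)
    (hbin : ∀ a ∈ 𝒜, ∀ l : L, a l = 0 ∨ a l = 1)
    (ha₀ : (fun _ : L => (1 : ℝ)) ∈ 𝒜)
    (H : (L → ℝ) → ℝ)
    (γ β wβ : L → ℝ)
    (hγ : ∀ l : L, 0 ≤ γ l) (hβ : ∀ l : L, 0 ≤ β l) (hwβ : ∀ l : L, 0 ≤ wβ l)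
    (f f' : L → ℝ) (hf : ∀ l : L, |f l| ≤ |f' l|) :
    ∃ q₁ q₂ : (L → ℝ) → ℝ,
      -- q₁ ∈ P(μ̄(f, y))
      ((∀ a ∈ 𝒜, 0 ≤ q₁ a) ∧ (∑ a ∈ 𝒜, q₁ a = 1) ∧
        (∀ l : L, ∑ a ∈ 𝒜, q₁ a * (1 - a l) ≤ γ l + β l * wβ l * |f l|)) ∧
      -- q₂ ∈ P(μ̄(f', y))
      ((∀ a ∈ 𝒜, 0 ≤ q₂ a) ∧ (∑ a ∈ 𝒜, q₂ a = 1) ∧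
        (∀ l : L, ∑ a ∈ 𝒜, q₂ a * (1 - a l) ≤ γ l + β l * wβ l * |f' l|)) ∧
      -- q₁ attains the maximum over P(μ̄(f, y))
      (∀ q : (L → ℝ) → ℝ,
        (∀ a ∈ 𝒜, 0 ≤ q a) → (∑ a ∈ 𝒜, q a = 1) →
        (∀ l : L, ∑ a ∈ 𝒜, q a * (1 - a l) ≤ γ l + β l * wβ l * |f l|) →
        ∑ a ∈ 𝒜, q a * H a ≤ ∑ a ∈ 𝒜, q₁ a * H a) ∧
      -- q₂ attains the maximum over P(μ̄(f', y))
      (∀ q : (L → ℝ) → ℝ,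
        (∀ a ∈ 𝒜, 0 ≤ q a) → (∑ a ∈ 𝒜, q a = 1) →
        (∀ l : L, ∑ a ∈ 𝒜, q a * (1 - a l) ≤ γ l + β l * wβ l * |f' l|) →
        ∑ a ∈ 𝒜, q a * H a ≤ ∑ a ∈ 𝒜, q₂ a * H a) ∧
      -- the maxima are ordered
      ∑ a ∈ 𝒜, q₁ a * H a ≤ ∑ a ∈ 𝒜, q₂ a * H a := by
  classical
  have hμ1 : ∀ l, 0 ≤ γ l + β l * wβ l * |f l| := fun l =>
    add_nonneg (hγ l) (mul_nonneg (mul_nonneg (hβ l) (hwβ l)) (abs_nonneg _))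
  have hμ2 : ∀ l, 0 ≤ γ l + β l * wβ l * |f' l| := fun l =>
    add_nonneg (hγ l) (mul_nonneg (mul_nonneg (hβ l) (hwβ l)) (abs_nonneg _))
  have hle : ∀ l, γ l + β l * wβ l * |f l| ≤ γ l + β l * wβ l * |f' l| := fun l =>
    add_le_add_right (mul_le_mul_of_nonneg_left (hf l) (mul_nonneg (hβ l) (hwβ l))) _
  obtain ⟨q₁, h10, h11, h1c, h1max⟩ := exists_max_pmf 𝒜 ha₀ H _ hμ1
  obtain ⟨q₂, h20, h21, h2c, h2max⟩ := exists_max_pmf 𝒜 ha₀ H _ hμ2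
  refine ⟨q₁, q₂, ⟨h10, h11, h1c⟩, ⟨h20, h21, h2c⟩, h1max, h2max, ?_⟩
  exact h2max q₁ h10 h11 fun l => (h1c l).trans (hle l)
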